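/- Let n ≥ 2 be an integer and k ≤ 0 a real number. Let (X,d) be a metric space and let μ be a Borel measure on X which is finite on bounded sets, with μ(B_r(x)) > 0 for every open ball, and with μ({x : d(x,p) = r}) = 0 for every p ∈ X and r > 0. Assume: (a) (Lebesgue density property) for every Borel set E ⊆ X, μ-almost every point of E belongs to E¹ and μ-almost every point of X ∖ E belongs to E⁰; (b) (small-ball perimeter comparison) for μ-almost every x ∈ X one has H^{n−1}(∂*B_ρ(x)) ≤ s(n,k,ρ) for every ρ > 0. Define the isoperimetric profile I_X(V) := inf{ H^{n−1}(∂*E) : E ⊆ X Borel, μ(E) = V } ∈ [0,+∞] for V ∈ (0, μ(X)) (the infimum of the empty family being +∞). Then I_X is upper semicontinuous on (0, μ(X)). -/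

import Mathlib

open MeasureTheory Metric Filter Bornology
open scoped ENNReal

/-- `sn_k`: the generalized sine function of the simply connected model
of constant sectional curvature `k ≤ 0`. -/
noncomputable def snK (k r : ℝ) : ℝ :=
  if k = 0 then r else Real.sinh (Real.sqrt (-k) * r) / Real.sqrt (-k)

/-- `s(n,k,r)`: surface area of the sphere of radius `r` in the `n`-dimensional
simply connected model of constant curvature `k`. -/
noncomputable def modelSurf (n : ℕ) (k r : ℝ) : ℝ :=
  n * (volume (ball (0 : EuclideanSpace ℝ (Fin n)) 1)).toReal * snK k r ^ (n - 1)

/-- The set of points of density `t` of a set `E` in a metric measure space. -/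
def densitySet {X : Type*} [MetricSpace X] [MeasurableSpace X]
    (μ : Measure X) (E : Set X) (t : ℝ≥0∞) : Set X :=
  {x : X | Tendsto (fun r : ℝ => μ (E ∩ ball x r) / μ (ball x r))
    (nhdsWithin 0 (Set.Ioi 0)) (nhds t)}

/-- The essential boundary of a set `E` in a metric measure space: the complement of
the union of the sets of points of density `0` and of density `1`. -/
def essBoundary {X : Type*} [MetricSpace X] [MeasurableSpace X]
    (μ : Measure X) (E : Set X) : Set X :=
  (densitySet μ E 0 ∪ densitySet μ E 1)ᶜ

/-- The isoperimetric profile: the infimum of `H^{n-1}(∂*E)` over Borel sets `E` of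
measure `V` (`+∞` if there are no such sets). -/
noncomputable def isoProfile {X : Type*} [MetricSpace X] [MeasurableSpace X] [BorelSpace X]
    (μ : Measure X) (n : ℕ) (V : ℝ) : ℝ≥0∞ :=
  ⨅ (E : Set X) (_ : MeasurableSet E) (_ : μ E = ENNReal.ofReal V),
    μH[(n : ℝ) - 1] (essBoundary μ E)


open scoped Topology
set_option linter.unusedSectionVars false

section AuxLemmas

lemma snK_nonneg {k r : ℝ} (hr : 0 ≤ r) : 0 ≤ snK k r := by
  unfold snK
  split
  · exact hr
  · apply div_nonneg _ (Real.sqrt_nonneg _)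
    have : (0:ℝ) = Real.sinh 0 := Real.sinh_zero.symm
    rw [this]
    exact Real.sinh_le_sinh.2 (mul_nonneg (Real.sqrt_nonneg _) hr)

lemma snK_mono {k a b : ℝ} (hk : k ≤ 0) (hab : a ≤ b) : snK k a ≤ snK k b := by
  unfold snK
  split
  · exact hab
  · rename_i hk0
    have hs : 0 < Real.sqrt (-k) := Real.sqrt_pos.2 (by
      rcases hk.lt_or_eq with h | h
      · linarith
      · exact absurd h hk0)
    gcongr
    exact Real.sinh_le_sinh.2 (by nlinarith)

lemma modelSurf_nonneg {n : ℕ} {k r : ℝ} (hr : 0 ≤ r) : 0 ≤ modelSurf n k r := by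
  apply mul_nonneg (mul_nonneg (by positivity) ENNReal.toReal_nonneg)
  exact pow_nonneg (snK_nonneg hr) _

lemma modelSurf_mono {n : ℕ} {k a b : ℝ} (hk : k ≤ 0) (ha : 0 ≤ a) (hab : a ≤ b) :
    modelSurf n k a ≤ modelSurf n k b := by
  apply mul_le_mul_of_nonneg_left _ (mul_nonneg (by positivity) ENNReal.toReal_nonneg)
  exact pow_le_pow_left₀ (snK_nonneg ha) (snK_mono hk hab) _

lemma snK_continuous (k : ℝ) : Continuous (snK k) := by
  unfold snK
  by_cases hk0 : k = 0
  · simp only [hk0, if_true]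
    exact continuous_id
  · simp only [hk0, if_false]
    exact (Real.continuous_sinh.comp (continuous_const.mul continuous_id)).div_const _

lemma snK_zero (k : ℝ) : snK k 0 = 0 := by
  unfold snK; split <;> simp

lemma modelSurf_tendsto_zero {n : ℕ} (hn : 2 ≤ n) (k : ℝ) :
    Tendsto (fun ρ => modelSurf n k ρ) (nhdsWithin (0:ℝ) (Set.Ioi 0)) (nhds 0) := by
  have hc : Continuous (fun ρ => modelSurf n k ρ) := by
    unfold modelSurf
    exact continuous_const.mul ((snK_continuous k).pow _)
  have h0 : modelSurf n k 0 = 0 := by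
    unfold modelSurf
    rw [snK_zero, zero_pow (by omega), mul_zero]
  have h2 : Tendsto (fun ρ => modelSurf n k ρ)
      (nhdsWithin (0:ℝ) (Set.Ioi 0)) (nhds (modelSurf n k 0)) :=
    (hc.tendsto 0).mono_left nhdsWithin_le_nhds
  rwa [h0] at h2

variable {X : Type*} [MetricSpace X] [MeasurableSpace X] [BorelSpace X]
  {μ : Measure X}

lemma ball_ev (hfinbd : ∀ s : Set X, IsBounded s → μ s ≠ ⊤)
    (hpos : ∀ (x : X) (r : ℝ), 0 < r → 0 < μ (ball x r)) (x : X) :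
    ∀ᶠ r in nhdsWithin (0:ℝ) (Set.Ioi 0), μ (ball x r) ≠ 0 ∧ μ (ball x r) ≠ ⊤ := by
  filter_upwards [self_mem_nhdsWithin] with r hr
  exact ⟨(hpos x r hr).ne', hfinbd _ isBounded_ball⟩

lemma dens_mono_zero {A B : Set X} (hAB : A ⊆ B) {x : X}
    (hB : x ∈ densitySet μ B 0) : x ∈ densitySet μ A 0 := by
  refine tendsto_of_tendsto_of_tendsto_of_le_of_le' tendsto_const_nhds hB
    (Eventually.of_forall fun r => zero_le) (Eventually.of_forall fun r => ?_)
  exact ENNReal.div_le_div_right (measure_mono (Set.inter_subset_inter_left _ hAB)) _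

lemma dens_union_zero {A B : Set X} {x : X}
    (hA : x ∈ densitySet μ A 0) (hB : x ∈ densitySet μ B 0) :
    x ∈ densitySet μ (A ∪ B) 0 := by
  have h := hA.add hB
  rw [add_zero] at h
  refine tendsto_of_tendsto_of_tendsto_of_le_of_le' tendsto_const_nhds h
    (Eventually.of_forall fun r => zero_le) (Eventually.of_forall fun r => ?_)
  calc μ ((A ∪ B) ∩ ball x r) / μ (ball x r)
      ≤ (μ (A ∩ ball x r) + μ (B ∩ ball x r)) / μ (ball x r) := by
        refine ENNReal.div_le_div_right ?_ _
        rw [Set.union_inter_distrib_right]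
        exact measure_union_le _ _
    _ = _ := ENNReal.add_div

lemma dens_union_one (hfinbd : ∀ s : Set X, IsBounded s → μ s ≠ ⊤)
    (hpos : ∀ (x : X) (r : ℝ), 0 < r → 0 < μ (ball x r)) {A B : Set X} {x : X}
    (hA : x ∈ densitySet μ A 1) : x ∈ densitySet μ (A ∪ B) 1 := by
  refine tendsto_of_tendsto_of_tendsto_of_le_of_le' hA tendsto_const_nhds
    (Eventually.of_forall fun r => ENNReal.div_le_div_right
      (measure_mono (Set.inter_subset_inter_left _ Set.subset_union_left)) _) ?_
  filter_upwards [ball_ev hfinbd hpos x] with r hr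
  rw [ENNReal.div_le_iff hr.1 hr.2, one_mul]
  exact measure_mono Set.inter_subset_right

lemma dens_compl_aux (hfinbd : ∀ s : Set X, IsBounded s → μ s ≠ ⊤)
    (hpos : ∀ (x : X) (r : ℝ), 0 < r → 0 < μ (ball x r)) {A : Set X}
    (hA : MeasurableSet A) {x : X} {t : ℝ≥0∞} (ht : t ≤ 1)
    (h : x ∈ densitySet μ A t) : x ∈ densitySet μ Aᶜ (1 - t) := by
  have key : (fun r : ℝ => μ (Aᶜ ∩ ball x r) / μ (ball x r))
      =ᶠ[nhdsWithin (0:ℝ) (Set.Ioi 0)]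
      (fun r : ℝ => 1 - μ (A ∩ ball x r) / μ (ball x r)) := by
    filter_upwards [ball_ev hfinbd hpos x] with r hr
    have hpart : μ (A ∩ ball x r) + μ (Aᶜ ∩ ball x r) = μ (ball x r) := by
      have h2 : Aᶜ ∩ ball x r = ball x r \ A := by
        rw [Set.diff_eq, Set.inter_comm]
      rw [Set.inter_comm A, h2]
      exact measure_inter_add_diff _ hA
    have hsum : μ (A ∩ ball x r) / μ (ball x r) + μ (Aᶜ ∩ ball x r) / μ (ball x r) = 1 := by
      rw [← ENNReal.add_div, hpart, ENNReal.div_self hr.1 hr.2]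
    have hfin : μ (A ∩ ball x r) / μ (ball x r) ≠ ⊤ := by
      refine (lt_of_le_of_lt (ENNReal.div_le_div_right (measure_mono Set.inter_subset_right) _)
        ?_).ne
      rw [ENNReal.div_self hr.1 hr.2]
      exact ENNReal.one_lt_top
    rw [add_comm] at hsum
    exact ENNReal.eq_sub_of_add_eq hfin hsum
  exact Tendsto.congr' key.symm
    (ENNReal.Tendsto.sub tendsto_const_nhds h (Or.inl ENNReal.one_ne_top))

lemma dens_compl_zero (hfinbd : ∀ s : Set X, IsBounded s → μ s ≠ ⊤)
    (hpos : ∀ (x : X) (r : ℝ), 0 < r → 0 < μ (ball x r)) {A : Set X}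
    (hA : MeasurableSet A) {x : X} (h : x ∈ densitySet μ A 1) :
    x ∈ densitySet μ Aᶜ 0 := by
  simpa using dens_compl_aux hfinbd hpos hA le_rfl h

lemma dens_compl_one (hfinbd : ∀ s : Set X, IsBounded s → μ s ≠ ⊤)
    (hpos : ∀ (x : X) (r : ℝ), 0 < r → 0 < μ (ball x r)) {A : Set X}
    (hA : MeasurableSet A) {x : X} (h : x ∈ densitySet μ A 0) :
    x ∈ densitySet μ Aᶜ 1 := by
  simpa using dens_compl_aux hfinbd hpos hA zero_le_one h

lemma dens_inter_one (hfinbd : ∀ s : Set X, IsBounded s → μ s ≠ ⊤)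
    (hpos : ∀ (x : X) (r : ℝ), 0 < r → 0 < μ (ball x r)) {A B : Set X}
    (hA : MeasurableSet A) (hB : MeasurableSet B) {x : X}
    (h1 : x ∈ densitySet μ A 1) (h2 : x ∈ densitySet μ B 1) :
    x ∈ densitySet μ (A ∩ B) 1 := by
  have h3 := dens_union_zero (dens_compl_zero hfinbd hpos hA h1)
    (dens_compl_zero hfinbd hpos hB h2)
  have h4 := dens_compl_one hfinbd hpos (hA.compl.union hB.compl) h3
  rwa [Set.compl_union, compl_compl, compl_compl] at h4

lemma essBoundary_union_subset (hfinbd : ∀ s : Set X, IsBounded s → μ s ≠ ⊤)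
    (hpos : ∀ (x : X) (r : ℝ), 0 < r → 0 < μ (ball x r)) (A B : Set X) :
    essBoundary μ (A ∪ B) ⊆ essBoundary μ A ∪ essBoundary μ B := by
  intro x hx
  by_contra hc
  simp only [essBoundary, Set.mem_union, Set.mem_compl_iff, not_or, not_not] at hc hx
  push_neg at hc
  obtain ⟨hcA, hcB⟩ := hc
  by_cases h0A : x ∈ densitySet μ A 0
  · by_cases h0B : x ∈ densitySet μ B 0
    · exact hx.1 (dens_union_zero h0A h0B)
    · exact hx.2 (by rw [Set.union_comm]; exact dens_union_one hfinbd hpos (hcB h0B))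
  · exact hx.2 (dens_union_one hfinbd hpos (hcA h0A))

lemma essBoundary_diff_subset (hfinbd : ∀ s : Set X, IsBounded s → μ s ≠ ⊤)
    (hpos : ∀ (x : X) (r : ℝ), 0 < r → 0 < μ (ball x r)) {A B : Set X}
    (hA : MeasurableSet A) (hB : MeasurableSet B) :
    essBoundary μ (A \ B) ⊆ essBoundary μ A ∪ essBoundary μ B := by
  intro x hx
  by_contra hc
  simp only [essBoundary, Set.mem_union, Set.mem_compl_iff, not_or, not_not] at hc hx
  push_neg at hc
  obtain ⟨hcA, hcB⟩ := hc
  by_cases h0A : x ∈ densitySet μ A 0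
  · exact hx.1 (by rw [Set.diff_eq]; exact dens_mono_zero Set.inter_subset_left h0A)
  · by_cases h0B : x ∈ densitySet μ B 0
    · refine hx.2 ?_
      rw [Set.diff_eq]
      exact dens_inter_one hfinbd hpos hA hB.compl (hcA h0A)
        (dens_compl_one hfinbd hpos hB h0B)
    · refine hx.1 ?_
      rw [Set.diff_eq]
      exact dens_mono_zero Set.inter_subset_right
        (dens_compl_zero hfinbd hpos hB (hcB h0B))

lemma measure_ball_inter_continuousAt
    (hfinbd : ∀ s : Set X, IsBounded s → μ s ≠ ⊤)
    (hsph : ∀ (p : X) (r : ℝ), 0 < r → μ (sphere p r) = 0)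
    {F : Set X} (hF : MeasurableSet F) (x : X) {r : ℝ} (hr : 0 < r) :
    ContinuousAt (fun s : ℝ => (μ (F ∩ ball x s)).toReal) r := by
  rw [Metric.continuousAt_iff]
  intro ε hε
  set s : ℕ → Set X := fun m => F ∩ (ball x (r + 1/(m+1)) \ ball x (r - 1/(m+1))) with hs
  have hanti : Antitone s := by
    intro m m' hmm'
    have h1 : (1:ℝ)/(m'+1) ≤ 1/(m+1) := by
      apply one_div_le_one_div_of_le
      · positivity
      · exact_mod_cast by omega
    refine Set.inter_subset_inter_right _ (Set.diff_subset_diff ?_ ?_)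
    · exact ball_subset_ball (by linarith)
    · exact ball_subset_ball (by linarith)
  have hiInter : (⋂ m, s m) ⊆ sphere x r := by
    intro y hy
    simp only [hs, Set.mem_iInter, Set.mem_inter_iff, Set.mem_diff, mem_ball] at hy
    have h1 : dist y x ≤ r := by
      by_contra hcon
      push_neg at hcon
      obtain ⟨m, hm⟩ := exists_nat_one_div_lt (sub_pos.2 hcon)
      have := (hy m).2.1
      push_cast at this hm ⊢
      linarith
    have h2 : r ≤ dist y x := by
      by_contra hcon
      push_neg at hcon
      obtain ⟨m, hm⟩ := exists_nat_one_div_lt (sub_pos.2 hcon)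
      have := (hy m).2.2
      push_cast at this hm ⊢
      linarith
    exact le_antisymm h1 h2
  have hmeas : ∀ m, NullMeasurableSet (s m) μ :=
    fun m => (hF.inter (measurableSet_ball.diff measurableSet_ball)).nullMeasurableSet
  have hfin : ∀ m, μ (s m) ≠ ⊤ := fun m =>
    hfinbd _ (isBounded_ball.subset ((Set.inter_subset_right).trans Set.diff_subset))
  have htend := tendsto_measure_iInter_atTop hmeas hanti ⟨0, hfin 0⟩
  have hzero : μ (⋂ m, s m) = 0 :=
    le_antisymm ((measure_mono hiInter).trans (hsph x r hr).le) (zero_le)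
  rw [hzero] at htend
  have hev : ∀ᶠ m in atTop, μ (s m) < ENNReal.ofReal ε := by
    apply htend.eventually_lt_const
    simpa using hε
  obtain ⟨m, hm⟩ := hev.exists
  refine ⟨1/(m+1), by positivity, fun {y} hy => ?_⟩
  rw [Real.dist_eq] at hy
  set δ : ℝ := 1/(m+1)
  have key : ∀ t : ℝ, |t - r| < δ →
      μ (F ∩ ball x (r - δ)) ≤ μ (F ∩ ball x t) ∧
      μ (F ∩ ball x t) ≤ μ (F ∩ ball x (r - δ)) + μ (s m) := by
    intro t ht
    rw [abs_sub_lt_iff] at ht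
    constructor
    · exact measure_mono (Set.inter_subset_inter_right _ (ball_subset_ball (by linarith)))
    · calc μ (F ∩ ball x t) ≤ μ ((F ∩ ball x (r - δ)) ∪ s m) := by
            refine measure_mono ?_
            intro z hz
            rcases lt_or_ge (dist z x) (r - δ) with h | h
            · exact Or.inl ⟨hz.1, mem_ball.2 h⟩
            · refine Or.inr ⟨hz.1, mem_ball.2 ?_, fun hcon => absurd (mem_ball.1 hcon) (not_lt.2 h)⟩
              have := mem_ball.1 hz.2
              linarith
        _ ≤ _ := measure_union_le _ _
  have hbfin : ∀ t : ℝ, μ (F ∩ ball x t) ≠ ⊤ := fun t =>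
    hfinbd _ (isBounded_ball.subset Set.inter_subset_right)
  obtain ⟨hy1, hy2⟩ := key y hy
  obtain ⟨hr1, hr2⟩ := key r (by simpa using (by positivity : (0:ℝ) < δ))
  have hsm : (μ (s m)).toReal < ε := by
    rw [← ENNReal.lt_ofReal_iff_toReal_lt (hfin m)]
    exact hm
  have e1 := ENNReal.toReal_mono (hbfin y) hy1
  have e2 := ENNReal.toReal_mono (ENNReal.add_ne_top.2 ⟨hbfin _, hfin m⟩) hy2
  have e3 := ENNReal.toReal_mono (hbfin r) hr1
  have e4 := ENNReal.toReal_mono (ENNReal.add_ne_top.2 ⟨hbfin _, hfin m⟩) hr2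
  rw [ENNReal.toReal_add (hbfin _) (hfin m)] at e2 e4
  rw [Real.dist_eq, abs_sub_lt_iff]
  constructor <;> linarith

lemma measure_singleton_zero
    (hsph : ∀ (p : X) (r : ℝ), 0 < r → μ (sphere p r) = 0)
    {p x : X} (hpx : p ≠ x) : μ {x} = 0 := by
  refine le_antisymm ?_ (zero_le)
  have h1 : ({x} : Set X) ⊆ sphere p (dist x p) := by
    intro y hy
    simp only [Set.mem_singleton_iff] at hy
    subst hy
    exact Metric.mem_sphere.2 rfl
  calc μ {x} ≤ μ (sphere p (dist x p)) := measure_mono h1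
    _ = 0 := hsph p _ (dist_pos.2 (Ne.symm hpx))

lemma exists_small_ball
    (hfinbd : ∀ s : Set X, IsBounded s → μ s ≠ ⊤)
    {F : Set X} (hF : MeasurableSet F) {x : X} (hx0 : μ {x} = 0)
    {v r0 : ℝ} (hv : 0 < v) (hr0 : 0 < r0) :
    ∃ r1 : ℝ, 0 < r1 ∧ r1 ≤ r0 ∧ (μ (F ∩ ball x r1)).toReal < v := by
  set s : ℕ → Set X := fun m => F ∩ closedBall x (1/(m+1)) with hs
  have hanti : Antitone s := by
    intro m m' hmm'
    refine Set.inter_subset_inter_right _ (closedBall_subset_closedBall ?_)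
    apply one_div_le_one_div_of_le
    · positivity
    · exact_mod_cast by omega
  have hiInter : (⋂ m, s m) ⊆ {x} := by
    intro y hy
    simp only [hs, Set.mem_iInter, Set.mem_inter_iff, mem_closedBall] at hy
    have : dist y x ≤ 0 := by
      by_contra hcon
      push_neg at hcon
      obtain ⟨m, hm⟩ := exists_nat_one_div_lt hcon
      have := (hy m).2
      push_cast at this hm
      linarith
    exact Set.mem_singleton_iff.2 (dist_le_zero.1 this)
  have hmeas : ∀ m, NullMeasurableSet (s m) μ :=
    fun m => (hF.inter measurableSet_closedBall).nullMeasurableSet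
  have hfin : ∀ m, μ (s m) ≠ ⊤ := fun m =>
    hfinbd _ (isBounded_closedBall.subset Set.inter_subset_right)
  have htend := tendsto_measure_iInter_atTop hmeas hanti ⟨0, hfin 0⟩
  have hzero : μ (⋂ m, s m) = 0 :=
    le_antisymm ((measure_mono hiInter).trans hx0.le) (zero_le)
  rw [hzero] at htend
  have hev1 : ∀ᶠ m in atTop, μ (s m) < ENNReal.ofReal v :=
    htend.eventually_lt_const (by simpa using hv)
  have hev2 : ∀ᶠ m : ℕ in atTop, (1:ℝ)/(m+1) < r0 := by
    have : Tendsto (fun m : ℕ => (1:ℝ)/(m+1)) atTop (nhds 0) :=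
      tendsto_one_div_add_atTop_nhds_zero_nat
    exact this.eventually_lt_const hr0
  obtain ⟨m, hm1, hm2⟩ := (hev1.and hev2).exists
  refine ⟨1/(m+1), by positivity, hm2.le, ?_⟩
  have hle : μ (F ∩ ball x (1/(m+1))) ≤ μ (s m) :=
    measure_mono (Set.inter_subset_inter_right _ ball_subset_closedBall)
  have := ENNReal.toReal_mono (hfin m) hle
  have hsm : (μ (s m)).toReal < v := by
    rw [← ENNReal.lt_ofReal_iff_toReal_lt (hfin m)]
    exact hm1
  linarith

variable {n : ℕ} {k : ℝ}

lemma isoProfile_le {μ : Measure X} {V : ℝ} {E : Set X} (hE : MeasurableSet E)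
    (hEV : μ E = ENNReal.ofReal V) :
    isoProfile μ n V ≤ μH[(n : ℝ) - 1] (essBoundary μ E) :=
  iInf_le_of_le E (iInf_le_of_le hE (iInf_le _ hEV))

lemma side_add (hn : 2 ≤ n) (hk : k ≤ 0) {μ : Measure X}
    (hnt : ∃ p q : X, p ≠ q)
    (hfinbd : ∀ s : Set X, IsBounded s → μ s ≠ ⊤)
    (hpos : ∀ (x : X) (r : ℝ), 0 < r → 0 < μ (ball x r))
    (hsph : ∀ (p : X) (r : ℝ), 0 < r → μ (sphere p r) = 0)
    (hleb : ∀ E : Set X, MeasurableSet E →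
      μ (E \ densitySet μ E 1) = 0 ∧ μ (Eᶜ \ densitySet μ E 0) = 0)
    (hball : ∀ᵐ x ∂μ, ∀ ρ : ℝ, 0 < ρ →
      μH[(n : ℝ) - 1] (essBoundary μ (ball x ρ)) ≤ ENNReal.ofReal (modelSurf n k ρ))
    {V ε : ℝ} (hV : 0 < V) (hV2 : ENNReal.ofReal V < μ Set.univ)
    {E : Set X} (hE : MeasurableSet E) (hEV : μ E = ENNReal.ofReal V) (hε : 0 < ε) :
    ∃ δ > 0, ∀ V' : ℝ, V ≤ V' → V' < V + δ →
      isoProfile μ n V' ≤ μH[(n : ℝ) - 1] (essBoundary μ E) + ENNReal.ofReal ε := by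
  classical
  set A : Set X := {x : X | ∀ ρ : ℝ, 0 < ρ →
    μH[(n : ℝ) - 1] (essBoundary μ (ball x ρ)) ≤ ENNReal.ofReal (modelSurf n k ρ)} with hA
  have hAc : μ Aᶜ = 0 := by
    rw [hA, Set.compl_setOf]
    exact ae_iff.1 hball
  -- μ Eᶜ ≠ 0
  have hEc : μ Eᶜ ≠ 0 := by
    intro h0
    have h3 : μ E + μ Eᶜ = μ Set.univ := measure_add_measure_compl hE
    rw [h0, add_zero, hEV] at h3
    exact absurd h3 hV2.ne
  -- find x
  have hnon : (Eᶜ ∩ (densitySet μ E 0 ∩ A)).Nonempty := by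
    rw [Set.nonempty_iff_ne_empty]
    intro hemp
    apply hEc
    have hsub : Eᶜ ⊆ (Eᶜ \ densitySet μ E 0) ∪ Aᶜ := by
      intro z hz
      by_cases h1 : z ∈ densitySet μ E 0
      · by_cases h2 : z ∈ A
        · exact absurd (Set.mem_inter hz (Set.mem_inter h1 h2)) (by simp [hemp])
        · exact Or.inr h2
      · exact Or.inl ⟨hz, h1⟩
    refine le_antisymm ?_ (zero_le)
    calc μ Eᶜ ≤ μ ((Eᶜ \ densitySet μ E 0) ∪ Aᶜ) := measure_mono hsub
      _ ≤ μ (Eᶜ \ densitySet μ E 0) + μ Aᶜ := measure_union_le _ _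
      _ = 0 := by rw [(hleb E hE).2, hAc, add_zero]
  obtain ⟨x, hxE, hx0, hxA⟩ := hnon
  -- find r0
  have hev1 : ∀ᶠ r in nhdsWithin (0:ℝ) (Set.Ioi 0),
      μ (E ∩ ball x r) / μ (ball x r) < 1 := hx0.eventually_lt_const zero_lt_one
  have hev2 : ∀ᶠ r in nhdsWithin (0:ℝ) (Set.Ioi 0), modelSurf n k r < ε :=
    (modelSurf_tendsto_zero hn k).eventually_lt_const hε
  obtain ⟨r0, hr1, hr2, ⟨hrpos0, hrfin0⟩, hr0pos⟩ :=
    ((hev1.and (hev2.and ((ball_ev hfinbd hpos x).and self_mem_nhdsWithin))).exists :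
      ∃ r0, _ ∧ _ ∧ _ ∧ r0 ∈ Set.Ioi (0:ℝ))
  replace hr0pos : 0 < r0 := hr0pos
  -- δ
  have hpart : μ (E ∩ ball x r0) + μ (Eᶜ ∩ ball x r0) = μ (ball x r0) := by
    have h2 : Eᶜ ∩ ball x r0 = ball x r0 \ E := by
      rw [Set.diff_eq, Set.inter_comm]
    rw [Set.inter_comm E, h2]
    exact measure_inter_add_diff _ hE
  have hδ0 : μ (Eᶜ ∩ ball x r0) ≠ 0 := by
    intro h0
    rw [h0, add_zero] at hpart
    rw [hpart, ENNReal.div_self hrpos0 hrfin0] at hr1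
    exact lt_irrefl _ hr1
  have hδfin : μ (Eᶜ ∩ ball x r0) ≠ ⊤ :=
    hfinbd _ (isBounded_ball.subset Set.inter_subset_right)
  set δ : ℝ := (μ (Eᶜ ∩ ball x r0)).toReal with hδdef
  have hδpos : 0 < δ := ENNReal.toReal_pos hδ0 hδfin
  refine ⟨δ, hδpos, fun V' hV'1 hV'2 => ?_⟩
  rcases eq_or_lt_of_le hV'1 with rfl | hVlt
  · exact (isoProfile_le hE hEV).trans le_self_add
  · set v : ℝ := V' - V with hvdef
    have hv : 0 < v := sub_pos.2 hVlt
    have hvδ : v < δ := by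
      rw [hvdef]
      linarith
    -- atomless
    have hxatom : μ {x} = 0 := by
      obtain ⟨p, q, hpq⟩ := hnt
      by_cases hxp : p = x
      · exact measure_singleton_zero hsph (show q ≠ x from fun h => hpq (by rw [hxp, h]))
      · exact measure_singleton_zero hsph hxp
    obtain ⟨r1, hr1pos, hr1le, hr1small⟩ :=
      exists_small_ball hfinbd hE.compl hxatom hv hr0pos
    -- IVT
    have hcont : ContinuousOn (fun t : ℝ => (μ (Eᶜ ∩ ball x t)).toReal) (Set.Icc r1 r0) :=
      fun t ht => (measure_ball_inter_continuousAt hfinbd hsph hE.compl x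
        (lt_of_lt_of_le hr1pos ht.1)).continuousWithinAt
    have hmem : v ∈ Set.Icc ((μ (Eᶜ ∩ ball x r1)).toReal) ((μ (Eᶜ ∩ ball x r0)).toReal) :=
      ⟨hr1small.le, hvδ.le⟩
    obtain ⟨ρ, hρmem, hρv⟩ := intermediate_value_Icc hr1le hcont hmem
    have hρpos : 0 < ρ := lt_of_lt_of_le hr1pos hρmem.1
    -- the competitor
    set E' : Set X := E ∪ ball x ρ with hE'def
    have hE'meas : MeasurableSet E' := hE.union measurableSet_ball
    have hμdiff : μ (ball x ρ \ E) = ENNReal.ofReal v := by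
      have h2 : ball x ρ \ E = Eᶜ ∩ ball x ρ := by
        rw [Set.diff_eq, Set.inter_comm]
      rw [h2, ← hρv, ENNReal.ofReal_toReal
        (hfinbd _ (isBounded_ball.subset Set.inter_subset_right))]
    have hE'V : μ E' = ENNReal.ofReal V' := by
      rw [hE'def, ← Set.union_diff_self, measure_union Set.disjoint_sdiff_right
        (measurableSet_ball.diff hE), hEV, hμdiff, ← ENNReal.ofReal_add hV.le hv.le]
      congr 1
      rw [hvdef]
      ring
    refine (isoProfile_le hE'meas hE'V).trans ?_
    calc μH[(n : ℝ) - 1] (essBoundary μ E')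
        ≤ μH[(n : ℝ) - 1] (essBoundary μ E ∪ essBoundary μ (ball x ρ)) :=
          measure_mono (essBoundary_union_subset hfinbd hpos E (ball x ρ))
      _ ≤ μH[(n : ℝ) - 1] (essBoundary μ E) + μH[(n : ℝ) - 1] (essBoundary μ (ball x ρ)) :=
          measure_union_le _ _
      _ ≤ μH[(n : ℝ) - 1] (essBoundary μ E) + ENNReal.ofReal ε := by
          gcongr
          refine (hxA ρ hρpos).trans ?_
          exact ENNReal.ofReal_le_ofReal
            ((modelSurf_mono hk hρpos.le (hρmem.2)).trans hr2.le)

lemma side_sub (hn : 2 ≤ n) (hk : k ≤ 0) {μ : Measure X}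
    (hnt : ∃ p q : X, p ≠ q)
    (hfinbd : ∀ s : Set X, IsBounded s → μ s ≠ ⊤)
    (hpos : ∀ (x : X) (r : ℝ), 0 < r → 0 < μ (ball x r))
    (hsph : ∀ (p : X) (r : ℝ), 0 < r → μ (sphere p r) = 0)
    (hleb : ∀ E : Set X, MeasurableSet E →
      μ (E \ densitySet μ E 1) = 0 ∧ μ (Eᶜ \ densitySet μ E 0) = 0)
    (hball : ∀ᵐ x ∂μ, ∀ ρ : ℝ, 0 < ρ →
      μH[(n : ℝ) - 1] (essBoundary μ (ball x ρ)) ≤ ENNReal.ofReal (modelSurf n k ρ))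
    {V ε : ℝ} (hV : 0 < V)
    {E : Set X} (hE : MeasurableSet E) (hEV : μ E = ENNReal.ofReal V) (hε : 0 < ε) :
    ∃ δ > 0, ∀ V' : ℝ, V - δ < V' → V' ≤ V →
      isoProfile μ n V' ≤ μH[(n : ℝ) - 1] (essBoundary μ E) + ENNReal.ofReal ε := by
  classical
  set A : Set X := {x : X | ∀ ρ : ℝ, 0 < ρ →
    μH[(n : ℝ) - 1] (essBoundary μ (ball x ρ)) ≤ ENNReal.ofReal (modelSurf n k ρ)} with hA
  have hAc : μ Aᶜ = 0 := by
    rw [hA, Set.compl_setOf]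
    exact ae_iff.1 hball
  have hEne : μ E ≠ 0 := by
    rw [hEV]
    exact (ENNReal.ofReal_pos.2 hV).ne'
  have hnon : (E ∩ (densitySet μ E 1 ∩ A)).Nonempty := by
    rw [Set.nonempty_iff_ne_empty]
    intro hemp
    apply hEne
    have hsub : E ⊆ (E \ densitySet μ E 1) ∪ Aᶜ := by
      intro z hz
      by_cases h1 : z ∈ densitySet μ E 1
      · by_cases h2 : z ∈ A
        · exact absurd (Set.mem_inter hz (Set.mem_inter h1 h2)) (by simp [hemp])
        · exact Or.inr h2
      · exact Or.inl ⟨hz, h1⟩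
    refine le_antisymm ?_ (zero_le)
    calc μ E ≤ μ ((E \ densitySet μ E 1) ∪ Aᶜ) := measure_mono hsub
      _ ≤ μ (E \ densitySet μ E 1) + μ Aᶜ := measure_union_le _ _
      _ = 0 := by rw [(hleb E hE).1, hAc, add_zero]
  obtain ⟨x, hxE, hx1, hxA⟩ := hnon
  have hev1 : ∀ᶠ r in nhdsWithin (0:ℝ) (Set.Ioi 0),
      0 < μ (E ∩ ball x r) / μ (ball x r) := hx1.eventually_const_lt zero_lt_one
  have hev2 : ∀ᶠ r in nhdsWithin (0:ℝ) (Set.Ioi 0), modelSurf n k r < ε :=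
    (modelSurf_tendsto_zero hn k).eventually_lt_const hε
  obtain ⟨r0, hr1, hr2, ⟨hrpos0, hrfin0⟩, hr0pos⟩ :=
    ((hev1.and (hev2.and ((ball_ev hfinbd hpos x).and self_mem_nhdsWithin))).exists :
      ∃ r0, _ ∧ _ ∧ _ ∧ r0 ∈ Set.Ioi (0:ℝ))
  replace hr0pos : 0 < r0 := hr0pos
  have hδ0 : μ (E ∩ ball x r0) ≠ 0 := by
    intro h0
    rw [h0, ENNReal.zero_div] at hr1
    exact lt_irrefl _ hr1
  have hδfin : μ (E ∩ ball x r0) ≠ ⊤ :=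
    hfinbd _ (isBounded_ball.subset Set.inter_subset_right)
  set δ : ℝ := (μ (E ∩ ball x r0)).toReal with hδdef
  have hδpos : 0 < δ := ENNReal.toReal_pos hδ0 hδfin
  refine ⟨δ, hδpos, fun V' hV'1 hV'2 => ?_⟩
  rcases eq_or_lt_of_le hV'2 with rfl | hVlt
  · exact (isoProfile_le hE hEV).trans le_self_add
  · set v : ℝ := V - V' with hvdef
    have hv : 0 < v := sub_pos.2 hVlt
    have hvδ : v < δ := by
      rw [hvdef]
      linarith
    have hxatom : μ {x} = 0 := by
      obtain ⟨p, q, hpq⟩ := hnt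
      by_cases hxp : p = x
      · exact measure_singleton_zero hsph (show q ≠ x from fun h => hpq (by rw [hxp, h]))
      · exact measure_singleton_zero hsph hxp
    obtain ⟨r1, hr1pos, hr1le, hr1small⟩ :=
      exists_small_ball hfinbd hE hxatom hv hr0pos
    have hcont : ContinuousOn (fun t : ℝ => (μ (E ∩ ball x t)).toReal) (Set.Icc r1 r0) :=
      fun t ht => (measure_ball_inter_continuousAt hfinbd hsph hE x
        (lt_of_lt_of_le hr1pos ht.1)).continuousWithinAt
    have hmem : v ∈ Set.Icc ((μ (E ∩ ball x r1)).toReal) ((μ (E ∩ ball x r0)).toReal) :=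
      ⟨hr1small.le, hvδ.le⟩
    obtain ⟨ρ, hρmem, hρv⟩ := intermediate_value_Icc hr1le hcont hmem
    have hρpos : 0 < ρ := lt_of_lt_of_le hr1pos hρmem.1
    set E' : Set X := E \ ball x ρ with hE'def
    have hE'meas : MeasurableSet E' := hE.diff measurableSet_ball
    have hμint : μ (E ∩ ball x ρ) = ENNReal.ofReal v := by
      rw [← hρv, ENNReal.ofReal_toReal
        (hfinbd _ (isBounded_ball.subset Set.inter_subset_right))]
    have hE'V : μ E' = ENNReal.ofReal V' := by
      rw [hE'def, ← Set.diff_self_inter, measure_diff Set.inter_subset_left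
        ((hE.inter measurableSet_ball).nullMeasurableSet)
        (hfinbd _ (isBounded_ball.subset Set.inter_subset_right)),
        hEV, hμint, ← ENNReal.ofReal_sub _ hv.le]
      congr 1
      rw [hvdef]
      ring
    refine (isoProfile_le hE'meas hE'V).trans ?_
    calc μH[(n : ℝ) - 1] (essBoundary μ E')
        ≤ μH[(n : ℝ) - 1] (essBoundary μ E ∪ essBoundary μ (ball x ρ)) :=
          measure_mono (essBoundary_diff_subset hfinbd hpos hE measurableSet_ball)
      _ ≤ μH[(n : ℝ) - 1] (essBoundary μ E) + μH[(n : ℝ) - 1] (essBoundary μ (ball x ρ)) :=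
          measure_union_le _ _
      _ ≤ μH[(n : ℝ) - 1] (essBoundary μ E) + ENNReal.ofReal ε := by
          gcongr
          refine (hxA ρ hρpos).trans ?_
          exact ENNReal.ofReal_le_ofReal
            ((modelSurf_mono hk hρpos.le (hρmem.2)).trans hr2.le)

end AuxLemmas

/-- Upper semicontinuity of the isoperimetric profile. -/
theorem isoProfile_upperSemicontinuous
    {X : Type*} [MetricSpace X] [MeasurableSpace X] [BorelSpace X]
    (n : ℕ) (hn : 2 ≤ n) (k : ℝ) (hk : k ≤ 0)
    (μ : Measure X)
    (hfinbd : ∀ s : Set X, IsBounded s → μ s ≠ ⊤)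
    (hpos : ∀ (x : X) (r : ℝ), 0 < r → 0 < μ (ball x r))
    (hsph : ∀ (p : X) (r : ℝ), 0 < r → μ (sphere p r) = 0)
    (hleb : ∀ E : Set X, MeasurableSet E →
      μ (E \ densitySet μ E 1) = 0 ∧ μ (Eᶜ \ densitySet μ E 0) = 0)
    (hball : ∀ᵐ x ∂μ, ∀ ρ : ℝ, 0 < ρ →
      μH[(n : ℝ) - 1] (essBoundary μ (ball x ρ)) ≤ ENNReal.ofReal (modelSurf n k ρ)) :
    UpperSemicontinuousOn (isoProfile μ n)
      {V : ℝ | 0 < V ∧ ENNReal.ofReal V < μ Set.univ} := by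
  intro V hV
  obtain ⟨hV1, hV2⟩ := hV
  intro y hy
  by_cases hnt : ∃ p q : X, p ≠ q
  · -- main case
    simp only [isoProfile, iInf_lt_iff] at hy
    obtain ⟨E, hE, hEV, hEP⟩ := hy
    obtain ⟨c, hc1, hc2⟩ := exists_between hEP
    have hcne : c ≠ ⊤ := (hc2.trans_le le_top).ne
    set ε : ℝ := (c - μH[(n : ℝ) - 1] (essBoundary μ E)).toReal with hεdef
    have hsubfin : c - μH[(n : ℝ) - 1] (essBoundary μ E) ≠ ⊤ :=
      (tsub_le_self.trans_lt hcne.lt_top).ne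
    have hεpos : 0 < ε := ENNReal.toReal_pos (tsub_pos_of_lt hc1).ne' hsubfin
    have hPc : μH[(n : ℝ) - 1] (essBoundary μ E) + ENNReal.ofReal ε = c := by
      rw [hεdef, ENNReal.ofReal_toReal hsubfin]
      exact add_tsub_cancel_of_le hc1.le
    obtain ⟨δ1, hδ1, hs1⟩ :=
      side_add hn hk hnt hfinbd hpos hsph hleb hball hV1 hV2 hE hEV hεpos
    obtain ⟨δ2, hδ2, hs2⟩ :=
      side_sub hn hk hnt hfinbd hpos hsph hleb hball hV1 hE hEV hεpos
    have hev : ∀ᶠ V' in nhdsWithin V {V : ℝ | 0 < V ∧ ENNReal.ofReal V < μ Set.univ},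
        |V' - V| < min δ1 δ2 := by
      apply Eventually.filter_mono nhdsWithin_le_nhds
      filter_upwards [Metric.ball_mem_nhds V (lt_min hδ1 hδ2)] with z hz
      rwa [Metric.mem_ball, Real.dist_eq] at hz
    filter_upwards [hev] with V' hV'
    have hlt : μH[(n : ℝ) - 1] (essBoundary μ E) + ENNReal.ofReal ε < y := hPc ▸ hc2
    rw [abs_sub_lt_iff] at hV'
    have hm1 := min_le_left δ1 δ2
    have hm2 := min_le_right δ1 δ2
    rcases le_or_gt V V' with h | h
    · exact lt_of_le_of_lt (hs1 V' h (by linarith [hV'.1])) hlt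
    · exact lt_of_le_of_lt (hs2 V' (by linarith [hV'.2]) h.le) hlt
  · -- degenerate case: X is a subsingleton
    exfalso
    have hprof : isoProfile μ n V = ⊤ := by
      rw [isoProfile]
      simp only [iInf_eq_top]
      intro E hE hEV
      exfalso
      push_neg at hnt
      rcases Set.eq_empty_or_nonempty E with rfl | ⟨a, ha⟩
      · rw [measure_empty] at hEV
        exact absurd hEV (ENNReal.ofReal_pos.2 hV1).ne
      · have hEuniv : E = Set.univ := by
          ext z
          simp only [Set.mem_univ, iff_true]
          rw [hnt z a]
          exact ha
        rw [hEuniv] at hEV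
        exact absurd hEV hV2.ne'
    rw [hprof] at hy
    exact not_top_lt hy
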